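/- For H(x,y,p,q) := 3 q² p/(p² + 1), the Wünschmann invariant W(H) := 9 D D H_q − 27 D H_p − 18 H_q D H_q + 18 H_q H_p + 4 H_q³ + 54 H_y vanishes identically on ℝ⁴, where D := ∂_x + p∂_y + q∂_p + H∂_q. -/

import Mathlib

/-- Partial derivative in the `x` slot. -/
noncomputable def px (G : ℝ → ℝ → ℝ → ℝ → ℝ) : ℝ → ℝ → ℝ → ℝ → ℝ :=
  fun x y p q => deriv (fun s => G s y p q) x

/-- Partial derivative in the `y` slot. -/
noncomputable def py (G : ℝ → ℝ → ℝ → ℝ → ℝ) : ℝ → ℝ → ℝ → ℝ → ℝ :=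
  fun x y p q => deriv (fun s => G x s p q) y

/-- Partial derivative in the `p` slot. -/
noncomputable def pp (G : ℝ → ℝ → ℝ → ℝ → ℝ) : ℝ → ℝ → ℝ → ℝ → ℝ :=
  fun x y p q => deriv (fun s => G x y s q) p

/-- Partial derivative in the `q` slot. -/
noncomputable def pq (G : ℝ → ℝ → ℝ → ℝ → ℝ) : ℝ → ℝ → ℝ → ℝ → ℝ :=
  fun x y p q => deriv (fun s => G x y p s) q

/-- The total differentiation operator `D = ∂x + p ∂y + q ∂p + H ∂q` associated
to the third-order ODE `y''' = H(x,y,y',y'')`. -/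
noncomputable def DOp (H G : ℝ → ℝ → ℝ → ℝ → ℝ) : ℝ → ℝ → ℝ → ℝ → ℝ :=
  fun x y p q =>
    px G x y p q + p * py G x y p q + q * pp G x y p q + H x y p q * pq G x y p q

/-- The Wünschmann invariant
`W(H) = 9 D D H_q − 27 D H_p − 18 H_q D H_q + 18 H_q H_p + 4 H_q³ + 54 H_y`. -/
noncomputable def Wun (H : ℝ → ℝ → ℝ → ℝ → ℝ) : ℝ → ℝ → ℝ → ℝ → ℝ :=
  fun x y p q =>
    9 * DOp H (DOp H (pq H)) x y p q
      - 27 * DOp H (pp H) x y p q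
      - 18 * pq H x y p q * DOp H (pq H) x y p q
      + 18 * pq H x y p q * pp H x y p q
      + 4 * (pq H x y p q) ^ 3
      + 54 * py H x y p q

/- Named stages -/
noncomputable def H₀ : ℝ → ℝ → ℝ → ℝ → ℝ := fun _ _ p q => 3 * q ^ 2 * p / (p ^ 2 + 1)
noncomputable def Hq₀ : ℝ → ℝ → ℝ → ℝ → ℝ := fun _ _ p q => 6 * q * p / (p ^ 2 + 1)
noncomputable def Hp₀ : ℝ → ℝ → ℝ → ℝ → ℝ := fun _ _ p q => 3 * q ^ 2 * (1 - p ^ 2) / (p ^ 2 + 1) ^ 2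
noncomputable def A₀ : ℝ → ℝ → ℝ → ℝ → ℝ := fun _ _ p q => 6 * q ^ 2 * (1 + 2 * p ^ 2) / (p ^ 2 + 1) ^ 2
noncomputable def B₀ : ℝ → ℝ → ℝ → ℝ → ℝ := fun _ _ p q => -(12 * p ^ 3 * q ^ 3) / (p ^ 2 + 1) ^ 3
noncomputable def C₀ : ℝ → ℝ → ℝ → ℝ → ℝ := fun _ _ p q => (36 * p * q ^ 3 + 48 * p ^ 3 * q ^ 3) / (p ^ 2 + 1) ^ 3

lemma hden (p : ℝ) : p ^ 2 + 1 ≠ 0 := by positivity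

lemma hasDerivAt_den (p : ℝ) : HasDerivAt (fun s : ℝ => s ^ 2 + 1) (2 * p) p := by
  simpa using (hasDerivAt_pow 2 p).add_const 1

lemma hasDerivAt_den2 (p : ℝ) :
    HasDerivAt (fun s : ℝ => (s ^ 2 + 1) ^ 2) (2 * (p ^ 2 + 1) * (2 * p)) p := by
  simpa using (hasDerivAt_den p).fun_pow 2

lemma hden2 (p : ℝ) : (p ^ 2 + 1) ^ 2 ≠ 0 := by positivity

lemma LpqH : pq H₀ = Hq₀ := by
  funext x y p q
  simp only [pq, H₀, Hq₀]
  have h : HasDerivAt (fun s : ℝ => 3 * s ^ 2 * p / (p ^ 2 + 1)) (6 * q * p / (p ^ 2 + 1)) q := by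
    have := (((hasDerivAt_pow 2 q).const_mul (3:ℝ)).mul_const p).div_const (p ^ 2 + 1)
    refine this.congr_deriv ?_
    push_cast; ring
  exact h.deriv

lemma LppH : pp H₀ = Hp₀ := by
  funext x y p q
  simp only [pp, H₀, Hp₀]
  have hn : HasDerivAt (fun s : ℝ => 3 * q ^ 2 * s) (3 * q ^ 2) p := by
    simpa using (hasDerivAt_id p).const_mul (3 * q ^ 2)
  rw [(hn.fun_div (hasDerivAt_den p) (hden p)).deriv]
  field_simp; ring

lemma LpyH : py H₀ = fun _ _ _ _ => (0:ℝ) := by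
  funext x y p q; simp [py, H₀]

/- Partials of Hq₀ -/
lemma LppHq : pp Hq₀ = fun _ _ p q => 6 * q * (1 - p ^ 2) / (p ^ 2 + 1) ^ 2 := by
  funext x y p q
  simp only [pp, Hq₀]
  have hn : HasDerivAt (fun s : ℝ => 6 * q * s) (6 * q) p := by
    simpa using (hasDerivAt_id p).const_mul (6 * q)
  rw [(hn.fun_div (hasDerivAt_den p) (hden p)).deriv]
  field_simp; ring

lemma LpqHq : pq Hq₀ = fun _ _ p _ => 6 * p / (p ^ 2 + 1) := by
  funext x y p q
  simp only [pq, Hq₀]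
  have hn : HasDerivAt (fun s : ℝ => 6 * s * p) (6 * p) q := by
    simpa using ((hasDerivAt_id q).const_mul (6:ℝ)).mul_const p
  rw [(hn.div_const (p ^ 2 + 1)).deriv]

lemma LDHq : DOp H₀ Hq₀ = A₀ := by
  funext x y p q
  simp only [DOp, LppHq, LpqHq, A₀, H₀]
  have h1 : px Hq₀ x y p q = 0 := by simp [px, Hq₀]
  have h2 : py Hq₀ x y p q = 0 := by simp [py, Hq₀]
  rw [h1, h2]
  field_simp; ring

/- Partials of Hp₀ -/
lemma LppHp : pp Hp₀ =
    fun _ _ p q => (-(6 * q ^ 2 * p) * (p ^ 2 + 1) ^ 2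
      - 3 * q ^ 2 * (1 - p ^ 2) * (2 * (p ^ 2 + 1) * (2 * p))) / ((p ^ 2 + 1) ^ 2) ^ 2 := by
  funext x y p q
  simp only [pp, Hp₀]
  have hn : HasDerivAt (fun s : ℝ => 3 * q ^ 2 * (1 - s ^ 2)) (-(6 * q ^ 2 * p)) p := by
    have := ((hasDerivAt_pow 2 p).const_sub 1).const_mul (3 * q ^ 2)
    refine this.congr_deriv ?_
    push_cast; ring
  rw [(hn.fun_div (hasDerivAt_den2 p) (hden2 p)).deriv]

lemma LpqHp : pq Hp₀ = fun _ _ p q => 6 * q * (1 - p ^ 2) / (p ^ 2 + 1) ^ 2 := by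
  funext x y p q
  simp only [pq, Hp₀]
  have hn : HasDerivAt (fun s : ℝ => 3 * s ^ 2 * (1 - p ^ 2)) (6 * q * (1 - p ^ 2)) q := by
    have := ((hasDerivAt_pow 2 q).const_mul (3:ℝ)).mul_const (1 - p ^ 2)
    refine this.congr_deriv ?_
    push_cast; ring
  rw [(hn.div_const ((p ^ 2 + 1) ^ 2)).deriv]

lemma LDHp : DOp H₀ Hp₀ = B₀ := by
  funext x y p q
  simp only [DOp, LppHp, LpqHp, B₀, H₀]
  have h1 : px Hp₀ x y p q = 0 := by simp [px, Hp₀]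
  have h2 : py Hp₀ x y p q = 0 := by simp [py, Hp₀]
  rw [h1, h2]
  field_simp; ring

/- Partials of A₀ -/
lemma LppA : pp A₀ =
    fun _ _ p q => (6 * q ^ 2 * (4 * p) * (p ^ 2 + 1) ^ 2
      - 6 * q ^ 2 * (1 + 2 * p ^ 2) * (2 * (p ^ 2 + 1) * (2 * p))) / ((p ^ 2 + 1) ^ 2) ^ 2 := by
  funext x y p q
  simp only [pp, A₀]
  have hn : HasDerivAt (fun s : ℝ => 6 * q ^ 2 * (1 + 2 * s ^ 2)) (6 * q ^ 2 * (4 * p)) p := by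
    have := (((hasDerivAt_pow 2 p).const_mul (2:ℝ)).const_add 1).const_mul (6 * q ^ 2)
    refine this.congr_deriv ?_
    push_cast; ring
  rw [(hn.fun_div (hasDerivAt_den2 p) (hden2 p)).deriv]

lemma LpqA : pq A₀ = fun _ _ p q => 12 * q * (1 + 2 * p ^ 2) / (p ^ 2 + 1) ^ 2 := by
  funext x y p q
  simp only [pq, A₀]
  have hn : HasDerivAt (fun s : ℝ => 6 * s ^ 2 * (1 + 2 * p ^ 2)) (12 * q * (1 + 2 * p ^ 2)) q := by
    have := ((hasDerivAt_pow 2 q).const_mul (6:ℝ)).mul_const (1 + 2 * p ^ 2)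
    refine this.congr_deriv ?_
    push_cast; ring
  rw [(hn.div_const ((p ^ 2 + 1) ^ 2)).deriv]

lemma LDA : DOp H₀ A₀ = C₀ := by
  funext x y p q
  simp only [DOp, LppA, LpqA, C₀, H₀]
  have h1 : px A₀ x y p q = 0 := by simp [px, A₀]
  have h2 : py A₀ x y p q = 0 := by simp [py, A₀]
  rw [h1, h2]
  field_simp; ring

/-- The Wünschmann invariant of `H = 3 q² p/(p² + 1)` vanishes identically. -/
theorem wunschmann_example_q2p_over_p2_add_one :
    ∀ x y p q : ℝ,
      Wun (fun _ _ p q => 3 * q ^ 2 * p / (p ^ 2 + 1)) x y p q = 0 := by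
  intro x y p q
  show Wun H₀ x y p q = 0
  simp only [Wun, LpqH, LppH, LpyH, LDHq, LDHp, LDA]
  simp only [Hq₀, Hp₀, A₀, B₀, C₀]
  field_simp
  ring
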